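/- Let γ⁺ ≥ 1 and γ⁻ > 0 be real numbers, let ρ ≥ 0 and n ≥ 0 with ρ + n > 0, and let x > 0 satisfy x^(γ⁺/γ⁻)·(x − ρ) = n·x. Then, with q̲ := min{1, γ⁻/γ⁺} and q̄ := max{1, γ⁻/γ⁺}, the pressure value x^γ⁺ satisfies q̲^γ⁺·(ρ^γ⁺ + n^γ⁻) ≤ x^γ⁺ ≤ (2·q̄)^γ⁺·(ρ^γ⁺ + n^γ⁻). -/

import Mathlib

open Real

/-- For `0 < r ≤ 1` and `b ≥ 0`, `r·(1 − r^b) ≤ b`. -/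
lemma aux_r_sub (b r : ℝ) (hb : 0 ≤ b) (hr0 : 0 < r) (hr1 : r ≤ 1) :
    r * (1 - r ^ b) ≤ b := by
  have h1 : 1 + b * Real.log r ≤ r ^ b := by
    rw [Real.rpow_def_of_pos hr0]
    have := Real.add_one_le_exp (Real.log r * b)
    linarith
  have h2 : Real.log r⁻¹ ≤ r⁻¹ - 1 := Real.log_le_sub_one_of_pos (by positivity)
  rw [Real.log_inv] at h2
  have h3 : 1 - r ^ b ≤ -(b * Real.log r) := by linarith
  have h4 : r * (1 - r ^ b) ≤ r * -(b * Real.log r) :=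
    mul_le_mul_of_nonneg_left h3 hr0.le
  have h5 : r * -Real.log r ≤ r * (r⁻¹ - 1) := mul_le_mul_of_nonneg_left h2 hr0.le
  have h6 : r * (r⁻¹ - 1) = 1 - r := by field_simp
  nlinarith [mul_nonneg hb (sub_nonneg.2 hr1)]

/-- Key estimate for the lower bound when `a ≥ 1`. -/
lemma aux_key (a x u : ℝ) (ha : 1 ≤ a) (hx : 0 < x) (hu : 0 < u) (hux : u ≤ x) :
    u ≤ (a - 1) * x + u ^ a * x ^ (1 - a) := by
  set r := u / x with hr
  have hr0 : 0 < r := div_pos hu hx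
  have hr1 : r ≤ 1 := (div_le_one hx).2 hux
  have hmain := aux_r_sub (a - 1) r (by linarith) hr0 hr1
  have hu_eq : u = r * x := by rw [hr, div_mul_cancel₀ u hx.ne']
  have hxa : u ^ a * x ^ (1 - a) = r ^ a * x := by
    rw [hu_eq, Real.mul_rpow hr0.le hx.le, mul_assoc, ← Real.rpow_add hx]
    norm_num
  have h3 : r ^ a = r * r ^ (a - 1) := by
    rw [mul_comm, ← Real.rpow_add_one hr0.ne' (a - 1)]
    norm_num
  rw [hxa, h3, hu_eq]
  nlinarith [hmain, hx]

/-- Superadditivity of `rpow` for exponent `≥ 1`. -/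
lemma aux_superadd (s t p : ℝ) (hs : 0 ≤ s) (ht : 0 ≤ t) (hp : 1 ≤ p) :
    s ^ p + t ^ p ≤ (s + t) ^ p := by
  rcases eq_or_lt_of_le (by linarith : (0:ℝ) ≤ s + t) with h | h
  · have hs0 : s = 0 := by linarith
    have ht0 : t = 0 := by linarith
    simp [hs0, ht0, Real.zero_rpow (by linarith : p ≠ 0)]
  · have h1 : s ^ p ≤ (s + t) ^ (p - 1) * s := by
      rcases eq_or_lt_of_le hs with h' | h'
      · rw [← h', Real.zero_rpow (by positivity : p ≠ 0)]
        positivity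
      · calc s ^ p = s ^ (p - 1) * s := by
              rw [← Real.rpow_add_one h'.ne' (p - 1)]; norm_num
          _ ≤ (s + t) ^ (p - 1) * s :=
              mul_le_mul_of_nonneg_right
                (Real.rpow_le_rpow hs (by linarith) (by linarith)) hs
    have h2 : t ^ p ≤ (s + t) ^ (p - 1) * t := by
      rcases eq_or_lt_of_le ht with h' | h'
      · rw [← h', Real.zero_rpow (by positivity : p ≠ 0)]
        positivity
      · calc t ^ p = t ^ (p - 1) * t := by
              rw [← Real.rpow_add_one h'.ne' (p - 1)]; norm_num
          _ ≤ (s + t) ^ (p - 1) * t :=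
              mul_le_mul_of_nonneg_right
                (Real.rpow_le_rpow ht (by linarith) (by linarith)) ht
    have h3 : (s + t) ^ (p - 1) * s + (s + t) ^ (p - 1) * t = (s + t) ^ p := by
      rw [← mul_add, ← Real.rpow_add_one h.ne' (p - 1)]
      norm_num
    linarith

set_option maxHeartbeats 2000000 in
/-- Bounds for the bi-fluid pressure `P(ρ,n) = ρ₊(ρ,n)^γ⁺`:
`q̲^γ⁺·(ρ^γ⁺ + n^γ⁻) ≤ P ≤ (2q̄)^γ⁺·(ρ^γ⁺ + n^γ⁻)`. -/
theorem biFluid_pressure_bounds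
    (gp gm ρ n x : ℝ) (hgp : 1 ≤ gp) (hgm : 0 < gm)
    (hρ : 0 ≤ ρ) (hn : 0 ≤ n) (hsum : 0 < ρ + n)
    (hx : 0 < x) (heq : x ^ (gp / gm) * (x - ρ) = n * x) :
    (min 1 (gm / gp)) ^ gp * (ρ ^ gp + n ^ gm) ≤ x ^ gp ∧
      x ^ gp ≤ (2 * max 1 (gm / gp)) ^ gp * (ρ ^ gp + n ^ gm) := by
  have hgp0 : 0 < gp := by linarith
  set a := gp / gm with ha_def
  have ha : 0 < a := div_pos hgp0 hgm
  have hxa : (0:ℝ) < x ^ a := Real.rpow_pos_of_pos hx a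
  have hinva : gm / gp = 1 / a := by rw [ha_def, one_div_div]
  -- first, the case n = 0
  rcases eq_or_lt_of_le hn with h0 | hn0
  · have hxρ : x = ρ := by
      rcases mul_eq_zero.mp (by rw [heq, ← h0]; ring) with h | h
      · exact absurd h hxa.ne'
      · linarith
    have h0gm : (0:ℝ) ^ gm = 0 := Real.zero_rpow hgm.ne'
    subst hxρ
    rw [← h0, h0gm]
    constructor
    · have hmin : (min 1 (gm / gp)) ^ gp ≤ 1 := by
        apply Real.rpow_le_one (le_min zero_le_one (by positivity)) (min_le_left _ _)
          hgp0.le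
      nlinarith [Real.rpow_nonneg hρ gp]
    · have hge : (1:ℝ) ≤ (2 * max 1 (gm / gp)) ^ gp := by
        calc (1:ℝ) = 1 ^ gp := (Real.one_rpow gp).symm
          _ ≤ (2 * max 1 (gm / gp)) ^ gp :=
            Real.rpow_le_rpow zero_le_one
              (by nlinarith [le_max_left 1 (gm/gp)]) hgp0.le
      nlinarith [Real.rpow_nonneg hρ gp]
  -- main case : n > 0
  have hxρ : x - ρ = n * x / x ^ a := by
    field_simp
    linarith [heq]
  have hρx : ρ ≤ x := by
    have : 0 ≤ n * x / x ^ a := by positivity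
    linarith
  have hnxa : n ≤ x ^ a := by
    have h1 : n * x ≤ x ^ a * x := by
      rw [← heq]; nlinarith [hxa]
    exact le_of_mul_le_mul_right (by linarith [h1]) hx
  set u := n ^ (gm / gp) with hu_def
  have hu : 0 < u := Real.rpow_pos_of_pos hn0 _
  have hua : u ^ a = n := by
    rw [hu_def, ← Real.rpow_mul hn, hinva, one_div, inv_mul_cancel₀ ha.ne',
      Real.rpow_one]
  have hux : u ≤ x := by
    calc u = n ^ (1/a) := by rw [hu_def, hinva]
      _ ≤ (x ^ a) ^ (1/a) := Real.rpow_le_rpow hn hnxa (by positivity)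
      _ = x := by
          rw [← Real.rpow_mul hx.le, mul_one_div, div_self ha.ne', Real.rpow_one]
  have hugp : u ^ gp = n ^ gm := by
    rw [hu_def, ← Real.rpow_mul hn, div_mul_cancel₀ _ hgp0.ne']
  have hx1a : n * x / x ^ a = u ^ a * x ^ (1 - a) := by
    rw [hua, Real.rpow_sub hx, Real.rpow_one]
    ring
  -- lower bound on x
  have hlow : min 1 (gm / gp) * (ρ + u) ≤ x := by
    rcases le_total a 1 with hca | hca
    · -- a ≤ 1, min = 1
      have hmin : min 1 (gm / gp) = 1 :=
        min_eq_left ((one_le_div hgp0).2 ((div_le_one hgm).1 hca))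
      rw [hmin, one_mul]
      have hkey : u ≤ u ^ a * x ^ (1 - a) := by
        calc u = u ^ a * u ^ (1 - a) := by
              rw [← Real.rpow_add hu]; norm_num
          _ ≤ u ^ a * x ^ (1 - a) :=
              mul_le_mul_of_nonneg_left
                (Real.rpow_le_rpow hu.le hux (by linarith)) (by positivity)
      have := hxρ
      rw [hx1a] at this
      linarith
    · -- 1 ≤ a, min = gm/gp = 1/a
      have hmin : min 1 (gm / gp) = 1 / a := by
        rw [← hinva]
        exact min_eq_right ((div_le_one hgp0).2 ((one_le_div hgm).1 hca))
      rw [hmin]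
      have hkey := aux_key a x u hca hx hu hux
      have heq2 : u ^ a * x ^ (1 - a) = x - ρ := by rw [← hx1a, ← hxρ]
      rw [heq2] at hkey
      rw [div_mul_eq_mul_div, div_le_iff₀ ha]
      nlinarith
  -- upper bound on x
  have hup : x ≤ 2 * max 1 (gm / gp) * max ρ u := by
    rcases le_total a 1 with hca | hca
    · -- a ≤ 1, max = 1/a
      have hmax : max 1 (gm / gp) = 1 / a := by
        rw [← hinva]
        exact max_eq_right ((one_le_div hgp0).2 ((div_le_one hgm).1 hca))
      rw [hmax]
      have hyoung : u ^ a * x ^ (1 - a) ≤ a * u + (1 - a) * x :=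
        Real.geom_mean_le_arith_mean2_weighted ha.le (by linarith) hu.le hx.le
          (by ring)
      have heq2 : x - ρ = u ^ a * x ^ (1 - a) := by rw [← hx1a, hxρ]
      have h1 : a * x ≤ ρ + a * u := by nlinarith
      have h2 : ρ ≤ max ρ u := le_max_left _ _
      have h3 : u ≤ max ρ u := le_max_right _ _
      have h4 : a * x ≤ 2 * max ρ u := by nlinarith
      calc x = (a * x) / a := by field_simp
        _ ≤ (2 * max ρ u) / a := by gcongr
        _ = 2 * (1 / a) * max ρ u := by ring
    · -- 1 ≤ a, max = 1
      have hmax : max 1 (gm / gp) = 1 :=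
        max_eq_left ((div_le_one hgp0).2 ((one_le_div hgm).1 hca))
      rw [hmax, mul_one]
      rcases le_total x (2 * ρ) with hc | hc
      · calc x ≤ 2 * ρ := hc
          _ ≤ 2 * max ρ u := by nlinarith [le_max_left ρ u]
      · -- x > 2ρ hence x^a < 2 n
        have h1 : x / 2 ≤ x - ρ := by linarith
        rw [hxρ] at h1
        have h2 : x ^ a / 2 ≤ n := by
          rw [div_le_div_iff₀ (by norm_num) hxa] at h1
          have h1' : x ^ a * x ≤ n * 2 * x := by nlinarith
          have : x ^ a ≤ n * 2 := le_of_mul_le_mul_right h1' hx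
          linarith
        have h3 : x ≤ 2 ^ (1/a) * u := by
          calc x = (x ^ a) ^ (1/a) := by
                rw [← Real.rpow_mul hx.le, mul_one_div, div_self ha.ne',
                  Real.rpow_one]
            _ ≤ (2 * n) ^ (1/a) := Real.rpow_le_rpow (by positivity)
                (by linarith) (by positivity)
            _ = 2 ^ (1/a) * n ^ (1/a) := Real.mul_rpow (by norm_num) hn
            _ = 2 ^ (1/a) * u := by rw [hu_def, hinva]
        have h4 : (2:ℝ) ^ (1/a) ≤ 2 := by
          calc (2:ℝ) ^ (1/a) ≤ 2 ^ (1:ℝ) :=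
              Real.rpow_le_rpow_of_exponent_le one_le_two
                (by rw [div_le_one ha]; linarith)
            _ = 2 := Real.rpow_one 2
        calc x ≤ 2 ^ (1/a) * u := h3
          _ ≤ 2 * u := mul_le_mul_of_nonneg_right h4 hu.le
          _ ≤ 2 * max ρ u := by nlinarith [le_max_right ρ u]
  -- assemble
  have hqlo : 0 ≤ min 1 (gm / gp) := le_min zero_le_one (by positivity)
  have hqhi : 0 ≤ 2 * max 1 (gm / gp) := by positivity
  constructor
  · have h1 : (min 1 (gm / gp) * (ρ + u)) ^ gp ≤ x ^ gp :=
      Real.rpow_le_rpow (by positivity) hlow hgp0.le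
    rw [Real.mul_rpow hqlo (by positivity)] at h1
    have h2 : ρ ^ gp + u ^ gp ≤ (ρ + u) ^ gp := aux_superadd ρ u gp hρ hu.le hgp
    have h3 : (min 1 (gm/gp)) ^ gp * (ρ ^ gp + u ^ gp) ≤
        (min 1 (gm/gp)) ^ gp * (ρ + u) ^ gp :=
      mul_le_mul_of_nonneg_left h2 (Real.rpow_nonneg hqlo gp)
    rw [hugp] at h3
    linarith
  · have h1 : x ^ gp ≤ (2 * max 1 (gm / gp) * max ρ u) ^ gp :=
      Real.rpow_le_rpow hx.le hup hgp0.le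
    rw [Real.mul_rpow hqhi (le_max_iff.2 (Or.inl hρ))] at h1
    have h2 : (max ρ u) ^ gp ≤ ρ ^ gp + n ^ gm := by
      rcases max_cases ρ u with ⟨h, _⟩ | ⟨h, _⟩ <;> rw [h]
      · nlinarith [Real.rpow_nonneg hn gm]
      · rw [← hugp]; nlinarith [Real.rpow_nonneg hρ gp]
    have h3 : (2 * max 1 (gm/gp)) ^ gp * (max ρ u) ^ gp ≤
        (2 * max 1 (gm/gp)) ^ gp * (ρ ^ gp + n ^ gm) :=
      mul_le_mul_of_nonneg_left h2 (Real.rpow_nonneg hqhi gp)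
    linarith
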